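/- Under the Lipschitz assumption ‖v_t(x) - v_{t̃}(x̃)‖ ≤ L(‖x - x̃‖ + W₂(μ_t, μ_{t̃})) and a uniform bound ‖v_t‖ ≤ B, the piecewise-constant forward Euler interpolation μ_t^s of the gradient flow satisfies sup_{t∈[0,T]} W₂(μ_t, μ_t^s) ≤ C·s for some constant C depending only on L, B, T. -/

import Mathlib

open MeasureTheory

/-- The quadratic Wasserstein distance on `ℝ^m`. -/
noncomputable def W2 {m : ℕ} (μ ν : Measure (EuclideanSpace ℝ (Fin m))) : ℝ :=
  sInf {c : ℝ | ∃ γ : Measure (EuclideanSpace ℝ (Fin m) × EuclideanSpace ℝ (Fin m)),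
    γ.map Prod.fst = μ ∧ γ.map Prod.snd = ν ∧
    c = Real.sqrt (∫ z, ‖z.1 - z.2‖ ^ 2 ∂γ)}

/-- The forward Euler measures `μ_{k+1} = (Id + s v_{ks})_# μ_k`. -/
noncomputable def eulerMeas {m : ℕ} (v : ℝ → EuclideanSpace ℝ (Fin m) → EuclideanSpace ℝ (Fin m))
    (μ0 : Measure (EuclideanSpace ℝ (Fin m))) (s : ℝ) : ℕ → Measure (EuclideanSpace ℝ (Fin m))
  | 0 => μ0
  | (k + 1) => (eulerMeas v μ0 s k).map (fun x => x + s • v ((k : ℝ) * s) x)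

/-- The piecewise-constant-velocity interpolation
`μ_t^s = (Id + (t - ks) v_{ks})_# μ_k` for `t ∈ [ks, (k+1)s)`, with `k = ⌊t/s⌋`. -/
noncomputable def eulerInterp {m : ℕ} (v : ℝ → EuclideanSpace ℝ (Fin m) → EuclideanSpace ℝ (Fin m))
    (μ0 : Measure (EuclideanSpace ℝ (Fin m))) (s t : ℝ) : Measure (EuclideanSpace ℝ (Fin m)) :=
  (eulerMeas v μ0 s ⌊t / s⌋₊).map
    (fun x => x + (t - (⌊t / s⌋₊ : ℝ) * s) • v ((⌊t / s⌋₊ : ℝ) * s) x)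

/-- Auxiliary: the pointwise forward Euler iteration maps. -/
noncomputable def eulerMap {m : ℕ} (v : ℝ → EuclideanSpace ℝ (Fin m) → EuclideanSpace ℝ (Fin m))
    (s : ℝ) : ℕ → EuclideanSpace ℝ (Fin m) → EuclideanSpace ℝ (Fin m)
  | 0 => id
  | (k + 1) => fun x => eulerMap v s k x + s • v ((k : ℝ) * s) (eulerMap v s k x)

lemma eulerMeas_eq_map {m : ℕ} (v : ℝ → EuclideanSpace ℝ (Fin m) → EuclideanSpace ℝ (Fin m))
    (μ0 : Measure (EuclideanSpace ℝ (Fin m))) (s : ℝ) (k : ℕ)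
    (hv : ∀ j, j < k → Continuous (v ((j : ℝ) * s))) :
    Continuous (eulerMap v s k) ∧ eulerMeas v μ0 s k = μ0.map (eulerMap v s k) := by
  induction k with
  | zero => exact ⟨continuous_id, Measure.map_id.symm⟩
  | succ k ih =>
    obtain ⟨hc, he⟩ := ih (fun j hj => hv j (Nat.lt_succ_of_lt hj))
    have hck : Continuous (v ((k : ℝ) * s)) := hv k (Nat.lt_succ_self k)
    have hstep : Continuous (fun x : EuclideanSpace ℝ (Fin m) => x + s • v ((k : ℝ) * s) x) :=
      continuous_id.add (hck.const_smul s)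
    refine ⟨?_, ?_⟩
    · exact hstep.comp hc
    · show (eulerMeas v μ0 s k).map _ = _
      rw [he, Measure.map_map hstep.measurable hc.measurable]
      rfl

/-- Upper bound on `W2` via an explicit coupling. -/
lemma W2_map_le {m : ℕ} (μ0 : Measure (EuclideanSpace ℝ (Fin m))) [IsProbabilityMeasure μ0]
    (φ ψ : EuclideanSpace ℝ (Fin m) → EuclideanSpace ℝ (Fin m))
    (hφ : AEMeasurable φ μ0) (hψ : AEMeasurable ψ μ0)
    {D : ℝ} (hD : 0 ≤ D) (hpt : ∀ x, ‖φ x - ψ x‖ ≤ D) :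
    W2 (μ0.map φ) (μ0.map ψ) ≤ D := by
  set γ : Measure (EuclideanSpace ℝ (Fin m) × EuclideanSpace ℝ (Fin m)) :=
    μ0.map (fun x => (φ x, ψ x)) with hγ
  have hpair : AEMeasurable (fun x => (φ x, ψ x)) μ0 := hφ.prodMk hψ
  have h1 : γ.map Prod.fst = μ0.map φ := by
    rw [hγ, AEMeasurable.map_map_of_aemeasurable measurable_fst.aemeasurable hpair]
    rfl
  have h2 : γ.map Prod.snd = μ0.map ψ := by
    rw [hγ, AEMeasurable.map_map_of_aemeasurable measurable_snd.aemeasurable hpair]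
    rfl
  have hcont : Continuous (fun z : EuclideanSpace ℝ (Fin m) × EuclideanSpace ℝ (Fin m) =>
      ‖z.1 - z.2‖ ^ 2) := by continuity
  have hint : ∫ z, ‖z.1 - z.2‖ ^ 2 ∂γ = ∫ x, ‖φ x - ψ x‖ ^ 2 ∂μ0 := by
    rw [hγ, integral_map hpair hcont.aestronglyMeasurable]
  have hmeas : AEStronglyMeasurable (fun x => ‖φ x - ψ x‖ ^ 2) μ0 :=
    ((hφ.sub hψ).norm.pow_const 2).aestronglyMeasurable
  have hintg : Integrable (fun x => ‖φ x - ψ x‖ ^ 2) μ0 := by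
    refine Integrable.mono' (integrable_const (D ^ 2)) hmeas ?_
    filter_upwards with x
    rw [Real.norm_eq_abs, abs_of_nonneg (by positivity)]
    exact pow_le_pow_left₀ (norm_nonneg _) (hpt x) 2
  have hle : ∫ x, ‖φ x - ψ x‖ ^ 2 ∂μ0 ≤ D ^ 2 := by
    calc ∫ x, ‖φ x - ψ x‖ ^ 2 ∂μ0 ≤ ∫ _, D ^ 2 ∂μ0 :=
          integral_mono hintg (integrable_const _)
            (fun x => pow_le_pow_left₀ (norm_nonneg _) (hpt x) 2)
      _ = D ^ 2 := by simp
  have hmem : Real.sqrt (∫ z, ‖z.1 - z.2‖ ^ 2 ∂γ) ∈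
      {c : ℝ | ∃ γ' : Measure (EuclideanSpace ℝ (Fin m) × EuclideanSpace ℝ (Fin m)),
        γ'.map Prod.fst = μ0.map φ ∧ γ'.map Prod.snd = μ0.map ψ ∧
        c = Real.sqrt (∫ z, ‖z.1 - z.2‖ ^ 2 ∂γ')} := ⟨γ, h1, h2, rfl⟩
  have hbdd : BddBelow {c : ℝ |
      ∃ γ' : Measure (EuclideanSpace ℝ (Fin m) × EuclideanSpace ℝ (Fin m)),
        γ'.map Prod.fst = μ0.map φ ∧ γ'.map Prod.snd = μ0.map ψ ∧
        c = Real.sqrt (∫ z, ‖z.1 - z.2‖ ^ 2 ∂γ')} := by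
    refine ⟨0, ?_⟩
    rintro c ⟨γ', -, -, rfl⟩
    exact Real.sqrt_nonneg _
  calc W2 (μ0.map φ) (μ0.map ψ) ≤ Real.sqrt (∫ z, ‖z.1 - z.2‖ ^ 2 ∂γ) := csInf_le hbdd hmem
    _ ≤ Real.sqrt (D ^ 2) := Real.sqrt_le_sqrt (hint ▸ hle)
    _ = D := by rw [Real.sqrt_sq hD]

set_option maxHeartbeats 1000000 in
/-- Under a uniform bound `‖v_t‖ ≤ B` and joint Lipschitz continuity of the velocity fields
in `(x, μ_t)`, the forward Euler interpolation of the flow satisfies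
`sup_{t ∈ [0,T]} W₂(μ_t, μ_t^s) ≤ C s` for a constant `C` depending only on `L, B, T`. -/
theorem euler_discretization_error {m : ℕ} (B L T : ℝ)
    (hB : 0 ≤ B) (hL : 0 ≤ L) (hT : 0 < T)
    (v : ℝ → EuclideanSpace ℝ (Fin m) → EuclideanSpace ℝ (Fin m))
    (μ : ℝ → Measure (EuclideanSpace ℝ (Fin m)))
    [∀ t, IsProbabilityMeasure (μ t)]
    (X : ℝ → EuclideanSpace ℝ (Fin m) → EuclideanSpace ℝ (Fin m))
    (hX0 : ∀ x, X 0 x = x)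
    (hode : ∀ x t, HasDerivAt (fun τ => X τ x) (v t (X t x)) t)
    (hμ : ∀ t, μ t = (μ 0).map (X t))
    (hbound : ∀ t x, ‖v t x‖ ≤ B)
    (hlip : ∀ t t', t ∈ Set.Icc 0 T → t' ∈ Set.Icc 0 T → ∀ x x',
      ‖v t x - v t' x'‖ ≤ L * (‖x - x'‖ + W2 (μ t) (μ t'))) :
    ∃ C : ℝ, 0 ≤ C ∧ ∀ s > 0, ∀ t ∈ Set.Icc 0 T,
      W2 (μ t) (eulerInterp v (μ 0) s t) ≤ C * s := by
  have hXmeas : ∀ t, AEMeasurable (X t) (μ 0) := by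
    intro t
    by_contra h
    have h0 : μ t = 0 := by rw [hμ t, Measure.map_of_not_aemeasurable h]
    have h1 := measure_univ (μ := μ t)
    rw [h0] at h1
    simp at h1
  have hspeed : ∀ x a b, a ≤ b → ‖X b x - X a x‖ ≤ B * (b - a) :=
    fun x a b hab =>
      norm_image_sub_le_of_norm_deriv_le_segment'
        (f := fun τ => X τ x) (f' := fun τ => v τ (X τ x))
        (fun τ _ => (hode x τ).hasDerivWithinAt)
        (fun τ _ => hbound τ (X τ x)) b (Set.right_mem_Icc.2 hab)
  have hW2time : ∀ a b, a ≤ b → W2 (μ b) (μ a) ≤ B * (b - a) := by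
    intro a b hab
    rw [hμ a, hμ b]
    exact W2_map_le (μ 0) _ _ (hXmeas b) (hXmeas a)
      (mul_nonneg hB (sub_nonneg.2 hab)) (fun x => hspeed x a b hab)
  have hvcont : ∀ t ∈ Set.Icc (0 : ℝ) T, Continuous (v t) := by
    intro t ht
    have hlw : LipschitzWith ⟨L, hL⟩ (v t) := by
      apply LipschitzWith.of_dist_le_mul
      intro x x'
      rw [dist_eq_norm, dist_eq_norm]
      have h1 := hlip t t ht ht x x'
      have h2 := hW2time t t le_rfl
      show ‖v t x - v t x'‖ ≤ L * ‖x - x'‖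
      nlinarith [mul_nonneg hL (norm_nonneg (x - x'))]
    exact hlw.continuous
  refine ⟨2 * B * Real.exp (L * T) + 2 * B, by positivity, ?_⟩
  intro s hs t ht
  simp only [eulerInterp]
  set k := ⌊t / s⌋₊ with hk
  have hks_le : (k : ℝ) * s ≤ t := by
    have h1 := Nat.floor_le (div_nonneg ht.1 hs.le)
    calc (k : ℝ) * s ≤ (t / s) * s := by
          exact mul_le_mul_of_nonneg_right h1 hs.le
      _ = t := div_mul_cancel₀ t hs.ne'
  have ht_lt : t < ((k : ℝ) + 1) * s := by
    have h1 : t / s < (k : ℝ) + 1 := Nat.lt_floor_add_one (t / s)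
    have := mul_lt_mul_of_pos_right h1 hs
    rwa [div_mul_cancel₀ t hs.ne'] at this
  have hkT : (k : ℝ) * s ≤ T := hks_le.trans ht.2
  have hvj : ∀ j : ℕ, (j : ℝ) ≤ (k : ℝ) → Continuous (v ((j : ℝ) * s)) := by
    intro j hj
    apply hvcont
    exact ⟨by positivity, le_trans (mul_le_mul_of_nonneg_right hj hs.le) hkT⟩
  obtain ⟨hYc, hYe⟩ := eulerMeas_eq_map v (μ 0) s k
    (fun j hj => hvj j (Nat.cast_le.2 hj.le))
  have hck : Continuous (v ((k : ℝ) * s)) := hvj k le_rfl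
  have hstep : Continuous (fun x : EuclideanSpace ℝ (Fin m) =>
      x + (t - (k : ℝ) * s) • v ((k : ℝ) * s) x) :=
    continuous_id.add (hck.const_smul (t - (k : ℝ) * s))
  rw [hYe, Measure.map_map hstep.measurable hYc.measurable]
  -- pointwise discrete error bound
  have key : ∀ x, ∀ j : ℕ, (j : ℝ) * s ≤ T →
      ‖X ((j : ℝ) * s) x - eulerMap v s j x‖ ≤ 2 * B * s * ((1 + L * s) ^ j - 1) := by
    intro x j
    induction j with
    | zero => intro _; simp [hX0, eulerMap]
    | succ j ih =>
      intro hj1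
      have hjs : (j : ℝ) * s ≤ ((j : ℝ) + 1) * s := by nlinarith
      have hjT : (j : ℝ) * s ≤ T := by push_cast at hj1; linarith
      have hE := ih hjT
      set E := 2 * B * s * ((1 + L * s) ^ j - 1) with hEdef
      have hpj : (1:ℝ) ≤ (1 + L * s) ^ j := one_le_pow₀ (by nlinarith)
      have hEnn : 0 ≤ E := by
        rw [hEdef]
        nlinarith [mul_nonneg (mul_nonneg (by linarith : (0:ℝ) ≤ 2 * B) hs.le)
          (by linarith : (0:ℝ) ≤ (1 + L * s) ^ j - 1)]
      set a := (j : ℝ) * s with ha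
      set b := ((j : ℝ) + 1) * s with hb
      set Yj := eulerMap v s j x with hYj
      set w := v a Yj with hw
      have hderiv : ∀ τ ∈ Set.Icc a b,
          HasDerivWithinAt (fun τ => X τ x - (τ - a) • w)
            (v τ (X τ x) - w) (Set.Icc a b) τ := by
        intro τ _
        have h1 : HasDerivAt (fun τ => X τ x - (τ - a) • w)
            (v τ (X τ x) - (1 : ℝ) • w) τ :=
          (hode x τ).sub (((hasDerivAt_id τ).sub_const a).smul_const w)
        simpa using h1.hasDerivWithinAt
      have hbd : ∀ τ ∈ Set.Ico a b, ‖v τ (X τ x) - w‖ ≤ L * E + 2 * L * B * s := by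
        intro τ hτ
        have hτ0 : (0:ℝ) ≤ τ := le_trans (by positivity) hτ.1
        have hτT : τ ∈ Set.Icc (0:ℝ) T := ⟨hτ0, le_trans hτ.2.le (by rw [hb]; push_cast at hj1 ⊢; linarith)⟩
        have haT : a ∈ Set.Icc (0:ℝ) T := ⟨by positivity, hjT⟩
        have hW : W2 (μ τ) (μ a) ≤ B * (τ - a) := hW2time a τ hτ.1
        have hXd : ‖X τ x - X a x‖ ≤ B * (τ - a) := hspeed x a τ hτ.1
        have htri : ‖X τ x - Yj‖ ≤ ‖X τ x - X a x‖ + ‖X a x - Yj‖ := by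
          have := norm_sub_le_norm_sub_add_norm_sub (X τ x) (X a x) Yj
          exact this
        have hτs : τ - a ≤ s := by
          have := hτ.2
          rw [hb] at this; linarith
        have h5 : ‖X τ x - Yj‖ + W2 (μ τ) (μ a) ≤ E + 2 * B * s := by
          nlinarith [mul_le_mul_of_nonneg_left hτs hB]
        calc ‖v τ (X τ x) - w‖ ≤ L * (‖X τ x - Yj‖ + W2 (μ τ) (μ a)) := hlip τ a hτT haT _ _
          _ ≤ L * (E + 2 * B * s) := mul_le_mul_of_nonneg_left h5 hL
          _ = L * E + 2 * L * B * s := by ring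
      have hmv := norm_image_sub_le_of_norm_deriv_le_segment' hderiv hbd b
        (Set.right_mem_Icc.2 hjs)
      have hba : b - a = s := by rw [hb, ha]; ring
      have hfb : X b x - (b - a) • w - (X a x - (a - a) • w)
          = (X b x - eulerMap v s (j + 1) x) - (X a x - Yj) := by
        show X b x - (b - a) • w - (X a x - (a - a) • w)
          = (X b x - (Yj + s • v ((j : ℝ) * s) Yj)) - (X a x - Yj)
        rw [hba, ← ha, ← hw]
        simp only [sub_self, zero_smul, sub_zero]
        abel
      have hkey : ‖X b x - eulerMap v s (j + 1) x‖
          ≤ (L * E + 2 * L * B * s) * s + E := by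
        have h2 : ‖(X b x - eulerMap v s (j + 1) x) - (X a x - Yj)‖
            ≤ (L * E + 2 * L * B * s) * (b - a) := by rw [← hfb]; exact hmv
        rw [hba] at h2
        calc ‖X b x - eulerMap v s (j + 1) x‖
            = ‖((X b x - eulerMap v s (j + 1) x) - (X a x - Yj)) + (X a x - Yj)‖ := by
              congr 1; abel
          _ ≤ ‖(X b x - eulerMap v s (j + 1) x) - (X a x - Yj)‖ + ‖X a x - Yj‖ :=
              norm_add_le _ _
          _ ≤ (L * E + 2 * L * B * s) * s + E := add_le_add h2 hE
      have hcast : ((j + 1 : ℕ) : ℝ) * s = b := by rw [hb]; push_cast; ring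
      rw [hcast]
      calc ‖X b x - eulerMap v s (j + 1) x‖ ≤ (L * E + 2 * L * B * s) * s + E := hkey
        _ = 2 * B * s * ((1 + L * s) ^ (j + 1) - 1) := by rw [hEdef]; ring
  -- exponential bound on the discrete error
  have hexp : 2 * B * s * ((1 + L * s) ^ k - 1) ≤ 2 * B * Real.exp (L * T) * s := by
    have h1 : (1 + L * s : ℝ) ≤ Real.exp (L * s) := by
      have := Real.add_one_le_exp (L * s); linarith
    have h2 : (1 + L * s : ℝ) ^ k ≤ Real.exp (L * s) ^ k :=
      pow_le_pow_left₀ (by nlinarith) h1 k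
    have h3 : Real.exp (L * s) ^ k = Real.exp (L * s * k) := by
      rw [← Real.exp_nat_mul]; ring_nf
    have h4 : Real.exp (L * s * k) ≤ Real.exp (L * T) := by
      apply Real.exp_le_exp.2
      have : L * ((k : ℝ) * s) ≤ L * T := mul_le_mul_of_nonneg_left hkT hL
      linarith [this]
    have hp : (1 + L * s) ^ k - 1 ≤ Real.exp (L * T) := by
      have := Real.exp_pos (L * s * k)
      linarith [h2, h3.le, h3.ge, h4]
    nlinarith [mul_le_mul_of_nonneg_left hp
      (mul_nonneg (mul_nonneg (by norm_num : (0:ℝ) ≤ 2) hB) hs.le)]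
  -- final pointwise bound and conclusion
  rw [hμ t]
  refine W2_map_le (μ 0) _ _ (hXmeas t) (hstep.comp hYc).measurable.aemeasurable
    (by positivity) ?_
  intro x
  have hkey := key x k hkT
  have hXd : ‖X t x - X ((k : ℝ) * s) x‖ ≤ B * (t - (k : ℝ) * s) := hspeed x _ t hks_le
  have hts : t - (k : ℝ) * s ≤ s := by linarith
  have htsnn : 0 ≤ t - (k : ℝ) * s := by linarith
  have hwn : ‖(t - (k : ℝ) * s) • v ((k : ℝ) * s) (eulerMap v s k x)‖ ≤ B * s := by
    rw [norm_smul, Real.norm_eq_abs, abs_of_nonneg htsnn]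
    have := hbound ((k : ℝ) * s) (eulerMap v s k x)
    nlinarith
  have htri : ‖X t x - ((fun x => x + (t - (k : ℝ) * s) • v ((k : ℝ) * s) x) ∘ eulerMap v s k) x‖
      ≤ ‖X t x - X ((k : ℝ) * s) x‖ + ‖X ((k : ℝ) * s) x - eulerMap v s k x‖
        + ‖(t - (k : ℝ) * s) • v ((k : ℝ) * s) (eulerMap v s k x)‖ := by
    simp only [Function.comp_apply]
    have h1 : X t x - (eulerMap v s k x + (t - (k : ℝ) * s) • v ((k : ℝ) * s) (eulerMap v s k x))
        = (X t x - X ((k : ℝ) * s) x) + (X ((k : ℝ) * s) x - eulerMap v s k x)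
          - (t - (k : ℝ) * s) • v ((k : ℝ) * s) (eulerMap v s k x) := by abel
    rw [h1]
    exact le_trans (norm_sub_le _ _) (by gcongr; exact norm_add_le _ _)
  calc ‖X t x - ((fun x => x + (t - (k : ℝ) * s) • v ((k : ℝ) * s) x) ∘ eulerMap v s k) x‖
      ≤ B * (t - (k : ℝ) * s) + 2 * B * s * ((1 + L * s) ^ k - 1) + B * s := by
        refine le_trans htri ?_
        gcongr
      _ ≤ (2 * B * Real.exp (L * T) + 2 * B) * s := by nlinarith [hexp, mul_nonneg hB htsnn]
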